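/- Let ℓ ≥ 1 and define the edge-coloured graph F_ℓ on vertex set A ∪ B ∪ C with A = {a₁,…,a_{ℓ+1}}, B = {b₀,…,b_{3ℓ+1}}, C = {c₁,…,c_ℓ} and edges a_{i+1}b_{3i}, a_{i+1}b_{3i+1} for 0 ≤ i ≤ ℓ; c_{i+1}b_{3i}, c_{i+1}b_{3i+1}, c_{i+1}b_{3i+3}, c_{i+1}b_{3i+4} for 0 ≤ i ≤ ℓ−1; and b_{3i+1}b_{3i+2}, b_{3i+2}b_{3i+3} for 0 ≤ i ≤ ℓ−1, with the colouring described below. Then for every j ∈ {1,…,ℓ+1} there is a path in F_ℓ from b₀ to b_{3ℓ+1} whose vertex set is exactly B ∪ C ∪ {a_j}, and whose i-th edge has colour i for every i ∈ {1,…,4ℓ+2}. -/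
import Mathlib


/-- Vertices of the absorbing gadget `F_ℓ`: `gA k` is `a_k` (for `1 ≤ k ≤ ℓ+1`),
`gB k` is `b_k` (for `0 ≤ k ≤ 3ℓ+1`) and `gC k` is `c_k` (for `1 ≤ k ≤ ℓ`). -/
def gA (k : ℕ) : ℕ ⊕ ℕ ⊕ ℕ := Sum.inl k
def gB (k : ℕ) : ℕ ⊕ ℕ ⊕ ℕ := Sum.inr (Sum.inl k)
def gC (k : ℕ) : ℕ ⊕ ℕ ⊕ ℕ := Sum.inr (Sum.inr k)

/-- The coloured (directed) edges of the gadget `F_ℓ`: `gadgetEdgeAux ℓ c u v` means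
`uv` is an edge of `F_ℓ` of colour `c` (colours range over `1,…,4ℓ+2`). -/
def gadgetEdgeAux (ℓ c : ℕ) (u v : ℕ ⊕ ℕ ⊕ ℕ) : Prop :=
  (u = gA 1 ∧ v = gB 0 ∧ c = 1) ∨ (u = gB 0 ∧ v = gC 1 ∧ c = 1) ∨
  (u = gA 1 ∧ v = gB 1 ∧ c = 2) ∨ (u = gB 1 ∧ v = gC 1 ∧ c = 2) ∨
  (u = gA (ℓ+1) ∧ v = gB (3*ℓ) ∧ c = 4*ℓ+1) ∨ (u = gB (3*ℓ) ∧ v = gC ℓ ∧ c = 4*ℓ+1) ∨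
  (u = gA (ℓ+1) ∧ v = gB (3*ℓ+1) ∧ c = 4*ℓ+2) ∨ (u = gB (3*ℓ+1) ∧ v = gC ℓ ∧ c = 4*ℓ+2) ∨
  (∃ i, 1 ≤ i ∧ i ≤ ℓ - 1 ∧
    ((u = gA (i+1) ∧ v = gB (3*i) ∧ c = 4*i+1) ∨
     (u = gB (3*i) ∧ v = gC i ∧ c = 4*i+1) ∨
     (u = gB (3*i) ∧ v = gC (i+1) ∧ c = 4*i+1) ∨
     (u = gA (i+1) ∧ v = gB (3*i+1) ∧ c = 4*i+2) ∨
     (u = gB (3*i+1) ∧ v = gC i ∧ c = 4*i+2) ∨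
     (u = gB (3*i+1) ∧ v = gC (i+1) ∧ c = 4*i+2))) ∨
  (∃ i j, i ≤ ℓ - 1 ∧ (j = 1 ∨ j = 2) ∧
    u = gB (3*i+j) ∧ v = gB (3*i+j+1) ∧ c = 4*i+j+2)

/-- Symmetrised coloured edge relation of `F_ℓ`. -/
def gadgetEdge (ℓ c : ℕ) (u v : ℕ ⊕ ℕ ⊕ ℕ) : Prop :=
  gadgetEdgeAux ℓ c u v ∨ gadgetEdgeAux ℓ c v u

/-- middle vertex of block `i` in the path absorbing `a_{m+1}`. -/
def gMid (m i : ℕ) : ℕ ⊕ ℕ ⊕ ℕ :=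
  if i < m then gC (i+1) else if i = m then gA (m+1) else gC i

/-- the path function. -/
def pf (m k : ℕ) : ℕ ⊕ ℕ ⊕ ℕ :=
  if k % 4 = 0 then gB (3*(k/4))
  else if k % 4 = 1 then gMid m (k/4)
  else if k % 4 = 2 then gB (3*(k/4)+1)
  else gB (3*(k/4)+2)

lemma pf0 (m q : ℕ) : pf m (4*q) = gB (3*q) := by
  unfold pf
  rw [if_pos (by omega : (4*q) % 4 = 0), (by omega : (4*q)/4 = q)]

lemma pf1 (m q : ℕ) : pf m (4*q+1) = gMid m q := by
  unfold pf
  rw [if_neg (by omega : ¬ (4*q+1) % 4 = 0), if_pos (by omega : (4*q+1) % 4 = 1),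
    (by omega : (4*q+1)/4 = q)]

lemma pf2 (m q : ℕ) : pf m (4*q+2) = gB (3*q+1) := by
  unfold pf
  rw [if_neg (by omega : ¬ (4*q+2) % 4 = 0), if_neg (by omega : ¬ (4*q+2) % 4 = 1),
    if_pos (by omega : (4*q+2) % 4 = 2), (by omega : (4*q+2)/4 = q)]

lemma pf3 (m q : ℕ) : pf m (4*q+3) = gB (3*q+2) := by
  unfold pf
  rw [if_neg (by omega : ¬ (4*q+3) % 4 = 0), if_neg (by omega : ¬ (4*q+3) % 4 = 1),
    if_neg (by omega : ¬ (4*q+3) % 4 = 2), (by omega : (4*q+3)/4 = q)]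

lemma gMid_ne_gB (m i n : ℕ) : gMid m i ≠ gB n := by
  unfold gMid gA gB gC; split_ifs <;> simp

lemma gMid_inj (m i i' : ℕ) (h : gMid m i = gMid m i') : i = i' := by
  unfold gMid gA gC at h
  split_ifs at h <;> simp_all <;> omega

lemma gB_inj {a b : ℕ} (h : gB a = gB b) : a = b := by simpa [gB] using h

lemma pf_inj (m : ℕ) : Function.Injective (pf m) := by
  intro k k' h
  obtain ⟨q, hq⟩ : ∃ q, k = 4*q ∨ k = 4*q+1 ∨ k = 4*q+2 ∨ k = 4*q+3 := ⟨k/4, by omega⟩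
  obtain ⟨q', hq'⟩ : ∃ q', k' = 4*q' ∨ k' = 4*q'+1 ∨ k' = 4*q'+2 ∨ k' = 4*q'+3 :=
    ⟨k'/4, by omega⟩
  rcases hq with rfl|rfl|rfl|rfl <;> rcases hq' with rfl|rfl|rfl|rfl <;>
    simp only [pf0, pf1, pf2, pf3] at h <;>
    first
      | (exact absurd h (gMid_ne_gB _ _ _))
      | (exact absurd h.symm (gMid_ne_gB _ _ _))
      | (have := gMid_inj _ _ _ h; omega)
      | (have := gB_inj h; omega)

lemma auxD1 (ℓ c : ℕ) (hc : c = 1) : gadgetEdgeAux ℓ c (gA 1) (gB 0) :=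
  Or.inl ⟨rfl, rfl, hc⟩
lemma auxD2 (ℓ c : ℕ) (hc : c = 1) : gadgetEdgeAux ℓ c (gB 0) (gC 1) :=
  Or.inr (Or.inl ⟨rfl, rfl, hc⟩)
lemma auxD3 (ℓ c : ℕ) (hc : c = 2) : gadgetEdgeAux ℓ c (gA 1) (gB 1) :=
  Or.inr (Or.inr (Or.inl ⟨rfl, rfl, hc⟩))
lemma auxD4 (ℓ c : ℕ) (hc : c = 2) : gadgetEdgeAux ℓ c (gB 1) (gC 1) :=
  Or.inr (Or.inr (Or.inr (Or.inl ⟨rfl, rfl, hc⟩)))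
lemma auxD5 (ℓ c : ℕ) (hc : c = 4*ℓ+1) : gadgetEdgeAux ℓ c (gA (ℓ+1)) (gB (3*ℓ)) :=
  Or.inr (Or.inr (Or.inr (Or.inr (Or.inl ⟨rfl, rfl, hc⟩))))
lemma auxD6 (ℓ c : ℕ) (hc : c = 4*ℓ+1) : gadgetEdgeAux ℓ c (gB (3*ℓ)) (gC ℓ) :=
  Or.inr (Or.inr (Or.inr (Or.inr (Or.inr (Or.inl ⟨rfl, rfl, hc⟩)))))
lemma auxD7 (ℓ c : ℕ) (hc : c = 4*ℓ+2) : gadgetEdgeAux ℓ c (gA (ℓ+1)) (gB (3*ℓ+1)) :=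
  Or.inr (Or.inr (Or.inr (Or.inr (Or.inr (Or.inr (Or.inl ⟨rfl, rfl, hc⟩))))))
lemma auxD8 (ℓ c : ℕ) (hc : c = 4*ℓ+2) : gadgetEdgeAux ℓ c (gB (3*ℓ+1)) (gC ℓ) :=
  Or.inr (Or.inr (Or.inr (Or.inr (Or.inr (Or.inr (Or.inr (Or.inl ⟨rfl, rfl, hc⟩)))))))

lemma auxD9 (ℓ c : ℕ) (u v : ℕ ⊕ ℕ ⊕ ℕ) (i : ℕ) (h1 : 1 ≤ i) (h2 : i + 1 ≤ ℓ)
    (h : (u = gA (i+1) ∧ v = gB (3*i) ∧ c = 4*i+1) ∨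
         (u = gB (3*i) ∧ v = gC i ∧ c = 4*i+1) ∨
         (u = gB (3*i) ∧ v = gC (i+1) ∧ c = 4*i+1) ∨
         (u = gA (i+1) ∧ v = gB (3*i+1) ∧ c = 4*i+2) ∨
         (u = gB (3*i+1) ∧ v = gC i ∧ c = 4*i+2) ∨
         (u = gB (3*i+1) ∧ v = gC (i+1) ∧ c = 4*i+2)) :
    gadgetEdgeAux ℓ c u v :=
  Or.inr (Or.inr (Or.inr (Or.inr (Or.inr (Or.inr (Or.inr (Or.inr
    (Or.inl ⟨i, h1, by omega, h⟩))))))))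

lemma auxD10 (ℓ c i t : ℕ) (h2 : i + 1 ≤ ℓ) (ht : t = 1 ∨ t = 2) (hc : c = 4*i+t+2) :
    gadgetEdgeAux ℓ c (gB (3*i+t)) (gB (3*i+t+1)) :=
  Or.inr (Or.inr (Or.inr (Or.inr (Or.inr (Or.inr (Or.inr (Or.inr
    (Or.inr ⟨i, t, by omega, ht, rfl, rfl, hc⟩))))))))

lemma pf_edge (ℓ m : ℕ) (hℓ : 1 ≤ ℓ) (hm : m ≤ ℓ) (n : ℕ) (hn : n < 4*ℓ+2) :
    gadgetEdge ℓ (n+1) (pf m n) (pf m (n+1)) := by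
  obtain ⟨q, hq⟩ : ∃ q, n = 4*q ∨ n = 4*q+1 ∨ n = 4*q+2 ∨ n = 4*q+3 := ⟨n/4, by omega⟩
  rcases hq with rfl|rfl|rfl|rfl
  · -- gB (3q) -- gMid m q, colour 4q+1
    rw [pf0, pf1]
    unfold gMid
    split_ifs with h1 h2
    · -- target gC (q+1), q < m ≤ ℓ
      rcases Nat.eq_zero_or_pos q with rfl|hq1
      · exact Or.inl (auxD2 ℓ _ (by omega))
      · exact Or.inl (auxD9 ℓ _ _ _ q hq1 (by omega)
          (Or.inr (Or.inr (Or.inl ⟨rfl, rfl, by omega⟩))))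
    · -- target gA (m+1), q = m
      subst h2
      rcases Nat.eq_zero_or_pos q with rfl|hq1
      · exact Or.inr (auxD1 ℓ _ (by omega))
      · rcases eq_or_lt_of_le hm with h|h
        · subst h
          exact Or.inr (auxD5 _ _ (by omega))
        · exact Or.inr (auxD9 ℓ _ _ _ q hq1 (by omega) (Or.inl ⟨rfl, rfl, by omega⟩))
    · -- target gC q, q > m
      have hq1 : 1 ≤ q := by omega
      rcases eq_or_lt_of_le (show q ≤ ℓ by omega) with h|h
      · subst h
        exact Or.inl (auxD6 _ _ (by omega))
      · exact Or.inl (auxD9 ℓ _ _ _ q hq1 (by omega)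
          (Or.inr (Or.inl ⟨rfl, rfl, by omega⟩)))
  · -- gMid m q -- gB (3q+1), colour 4q+2
    rw [pf1, (by omega : 4*q+1+1 = 4*q+2), pf2]
    unfold gMid
    split_ifs with h1 h2
    · rcases Nat.eq_zero_or_pos q with rfl|hq1
      · exact Or.inr (auxD4 ℓ _ (by omega))
      · exact Or.inr (auxD9 ℓ _ _ _ q hq1 (by omega)
          (Or.inr (Or.inr (Or.inr (Or.inr (Or.inr ⟨rfl, rfl, by omega⟩))))))
    · subst h2
      rcases Nat.eq_zero_or_pos q with rfl|hq1
      · exact Or.inl (auxD3 ℓ _ (by omega))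
      · rcases eq_or_lt_of_le hm with h|h
        · subst h
          exact Or.inl (auxD7 _ _ (by omega))
        · exact Or.inl (auxD9 ℓ _ _ _ q hq1 (by omega)
            (Or.inr (Or.inr (Or.inr (Or.inl ⟨rfl, rfl, by omega⟩)))))
    · have hq1 : 1 ≤ q := by omega
      rcases eq_or_lt_of_le (show q ≤ ℓ by omega) with h|h
      · subst h
        exact Or.inr (auxD8 _ _ (by omega))
      · exact Or.inr (auxD9 ℓ _ _ _ q hq1 (by omega)
          (Or.inr (Or.inr (Or.inr (Or.inr (Or.inl ⟨rfl, rfl, by omega⟩))))))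
  · -- gB (3q+1) -- gB (3q+2), colour 4q+3
    rw [pf2, (by omega : 4*q+2+1 = 4*q+3), pf3, (by omega : 3*q+2 = 3*q+1+1)]
    exact Or.inl (auxD10 ℓ _ q 1 (by omega) (Or.inl rfl) (by omega))
  · -- gB (3q+2) -- gB (3q+3), colour 4q+4
    rw [pf3, (by omega : 4*q+3+1 = 4*(q+1)), pf0, (by omega : 3*(q+1) = 3*q+2+1)]
    exact Or.inl (auxD10 ℓ _ q 2 (by omega) (Or.inr rfl) (by omega))

/-- Proposition 5.2: for every `ℓ ≥ 1` and every `j ∈ {1,…,ℓ+1}`, the gadget `F_ℓ`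
contains a path from `b₀` to `b_{3ℓ+1}` whose vertex set is exactly `B ∪ C ∪ {a_j}`
and whose `i`-th edge has colour `i`, for every `i ∈ {1,…,4ℓ+2}`. -/
theorem stmt_9 (ℓ : ℕ) (hℓ : 1 ≤ ℓ) (j : ℕ) (hj1 : 1 ≤ j) (hj2 : j ≤ ℓ + 1) :
    ∃ p : Fin (4*ℓ + 3) → ℕ ⊕ ℕ ⊕ ℕ, Function.Injective p ∧
      p 0 = gB 0 ∧ p (Fin.last (4*ℓ + 2)) = gB (3*ℓ + 1) ∧
      Set.range p = {x | (∃ k ≤ 3*ℓ + 1, x = gB k) ∨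
        (∃ k, 1 ≤ k ∧ k ≤ ℓ ∧ x = gC k) ∨ x = gA j} ∧
      ∀ i : Fin (4*ℓ + 2), gadgetEdge ℓ (i.val + 1) (p i.castSucc) (p i.succ) := by
  set m := j - 1 with hm'
  have hmj : m + 1 = j := by omega
  have hmℓ : m ≤ ℓ := by omega
  refine ⟨fun i => pf m i.val, ?_, ?_, ?_, ?_, ?_⟩
  · intro a b h
    exact Fin.ext (pf_inj m h)
  · show pf m 0 = gB 0
    have := pf0 m 0
    simpa using this
  · show pf m (4*ℓ+2) = gB (3*ℓ+1)
    exact pf2 m ℓ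
  · ext x
    simp only [Set.mem_range, Set.mem_setOf_eq]
    constructor
    · rintro ⟨k, rfl⟩
      have hk : k.val < 4*ℓ+3 := k.isLt
      obtain ⟨q, hq⟩ : ∃ q, k.val = 4*q ∨ k.val = 4*q+1 ∨ k.val = 4*q+2 ∨ k.val = 4*q+3 :=
        ⟨k.val/4, by omega⟩
      rcases hq with hq|hq|hq|hq <;> rw [hq]
      · rw [pf0]; exact Or.inl ⟨3*q, by omega, rfl⟩
      · rw [pf1]; unfold gMid; split_ifs with h1 h2
        · exact Or.inr (Or.inl ⟨q+1, by omega, by omega, rfl⟩)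
        · rw [hmj]; exact Or.inr (Or.inr rfl)
        · exact Or.inr (Or.inl ⟨q, by omega, by omega, rfl⟩)
      · rw [pf2]; exact Or.inl ⟨3*q+1, by omega, rfl⟩
      · rw [pf3]; exact Or.inl ⟨3*q+2, by omega, rfl⟩
    · rintro (⟨k, hk, rfl⟩|⟨k, hk1, hk2, rfl⟩|rfl)
      · obtain ⟨q, hq⟩ : ∃ q, k = 3*q ∨ k = 3*q+1 ∨ k = 3*q+2 := ⟨k/3, by omega⟩
        rcases hq with rfl|rfl|rfl
        · exact ⟨⟨4*q, by omega⟩, pf0 m q⟩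
        · exact ⟨⟨4*q+2, by omega⟩, pf2 m q⟩
        · exact ⟨⟨4*q+3, by omega⟩, pf3 m q⟩
      · rcases le_or_gt k m with h|h
        · refine ⟨⟨4*(k-1)+1, by omega⟩, ?_⟩
          show pf m (4*(k-1)+1) = gC k
          rw [pf1]; unfold gMid
          rw [if_pos (by omega : k-1 < m), (by omega : k-1+1 = k)]
        · refine ⟨⟨4*k+1, by omega⟩, ?_⟩
          show pf m (4*k+1) = gC k
          rw [pf1]; unfold gMid
          rw [if_neg (by omega : ¬ k < m), if_neg (by omega : ¬ k = m)]
      · refine ⟨⟨4*m+1, by omega⟩, ?_⟩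
        show pf m (4*m+1) = gA j
        rw [pf1]; unfold gMid
        rw [if_neg (by omega : ¬ m < m), if_pos rfl, hmj]
  · intro i
    have h := pf_edge ℓ m hℓ hmℓ i.val i.isLt
    show gadgetEdge ℓ (i.val+1) (pf m i.castSucc.val) (pf m i.succ.val)
    rw [Fin.coe_castSucc, Fin.val_succ]
    exact h
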